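/- Let q be an odd prime power, F = GF(q²), and S = {s ∈ F : s^{q+1} = 1}. Then S generates the additive group of F; equivalently, the Cayley graph Cay((F,+), S) is connected. -/

import Mathlib

open Polynomial

theorem stmt_15 (q : ℕ) (hodd : Odd q) (hq : IsPrimePow q)
    (F : Type*) [Field F] [Fintype F] (hF : Fintype.card F = q ^ 2) :
    AddSubgroup.closure {s : F | s ^ (q + 1) = 1} = ⊤ ∧
      (SimpleGraph.fromRel fun g h : F =>
        g - h ∈ {s : F | s ^ (q + 1) = 1}).Connected := by
  classical
  set S : Set F := {s : F | s ^ (q + 1) = 1} with hS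
  set A : AddSubgroup F := AddSubgroup.closure S with hA
  have hq3 : 3 ≤ q := by
    rcases hq with ⟨p, k, hp, hk, rfl⟩
    have hp2 : 2 ≤ p := (Nat.prime_iff.mpr hp).two_le
    have : p ≠ 2 := by
      rintro rfl
      exact Nat.not_odd_iff_even.mpr
        (Nat.even_pow.mpr ⟨even_iff_two_dvd.mpr dvd_rfl, hk.ne'⟩) hodd
    have hp3 : 3 ≤ p := by omega
    calc 3 ≤ p := hp3
    _ = p ^ 1 := (pow_one p).symm
    _ ≤ p ^ k := Nat.pow_le_pow_right (by omega) hk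
  -- S is closed under multiplication and contains 1
  have hSmul : ∀ s ∈ S, ∀ t ∈ S, s * t ∈ S := by
    intro s hs t ht
    simp only [hS, Set.mem_setOf_eq] at *
    rw [mul_pow, hs, ht, one_mul]
  have hS1 : (1 : F) ∈ S := by simp [hS]
  -- A is closed under multiplication
  have hmulA : ∀ a ∈ A, ∀ b ∈ A, a * b ∈ A := by
    have step : ∀ s ∈ S, ∀ b ∈ A, s * b ∈ A := by
      intro s hs b hb
      induction hb using AddSubgroup.closure_induction with
      | mem t ht => exact AddSubgroup.subset_closure (hSmul s hs t ht)
      | zero => simpa using A.zero_mem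
      | add x y hx hy ihx ihy => rw [mul_add]; exact A.add_mem ihx ihy
      | neg x hx ihx => rw [mul_neg]; exact A.neg_mem ihx
    intro a ha
    induction ha using AddSubgroup.closure_induction with
    | mem s hs => exact step s hs
    | zero => intro b hb; simpa using A.zero_mem
    | add x y hx hy ihx ihy =>
        intro b hb; rw [add_mul]; exact A.add_mem (ihx b hb) (ihy b hb)
    | neg x hx ihx => intro b hb; rw [neg_mul]; exact A.neg_mem (ihx b hb)
  have hpow : ∀ a ∈ A, ∀ n : ℕ, a ^ (n + 1) ∈ A := by
    intro a ha n
    induction n with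
    | zero => simpa using ha
    | succ m ih => rw [pow_succ]; exact hmulA _ ih _ ha
  -- build a subfield
  have h1A : (1 : F) ∈ A := AddSubgroup.subset_closure hS1
  have hinv : ∀ a ∈ A, a⁻¹ ∈ A := by
    intro a ha
    rcases eq_or_ne a 0 with rfl | h0
    · simpa using A.zero_mem
    · have hcard : a ^ (Fintype.card F - 1) = 1 := FiniteField.pow_card_sub_one_eq_one a h0
      have hq2 : 9 ≤ Fintype.card F := by
        rw [hF]; nlinarith
      rw [show Fintype.card F - 1 = (Fintype.card F - 2) + 1 from by omega,
        pow_succ] at hcard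
      rw [← eq_inv_of_mul_eq_one_left hcard]
      have h2 : Fintype.card F - 2 = (Fintype.card F - 3) + 1 := by omega
      rw [h2]
      exact hpow a ha _
  let K : Subfield F :=
    { carrier := A
      mul_mem' := fun {a b} ha hb => hmulA a ha b hb
      one_mem' := h1A
      add_mem' := fun {a b} ha hb => A.add_mem ha hb
      zero_mem' := A.zero_mem
      neg_mem' := fun {a} ha => A.neg_mem ha
      inv_mem' := hinv }
  -- cardinality of K
  have hTsub : ∀ x ∈ nthRootsFinset (q + 1) (1 : F), x ∈ S := by
    intro x hx
    rw [mem_nthRootsFinset (by omega)] at hx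
    exact hx
  -- a primitive (q+1)-st root of unity exists
  have hζ : ∃ ζ : F, IsPrimitiveRoot ζ (q + 1) := by
    obtain ⟨g, hg⟩ := IsCyclic.exists_generator (α := Fˣ)
    have horder : orderOf g = q ^ 2 - 1 := by
      rw [orderOf_eq_card_of_forall_mem_zpowers hg, Nat.card_eq_fintype_card,
        Fintype.card_units, hF]
    refine ⟨((g ^ (q - 1) : Fˣ) : F), ?_⟩
    rw [IsPrimitiveRoot.coe_units_iff]
    have : orderOf (g ^ (q - 1)) = q + 1 := by
      rw [orderOf_pow, horder]
      obtain ⟨r, rfl⟩ : ∃ r, q = r + 1 := ⟨q - 1, by omega⟩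
      have key : (r + 1) ^ 2 - 1 = (r + 1 + 1) * (r + 1 - 1) := by
        have h1 : (r + 1) ^ 2 = r ^ 2 + 2 * r + 1 := by ring
        have h2 : (r + 1 + 1) * (r + 1 - 1) = (r + 2) * r := by simp
        have h3 : (r + 2) * r = r ^ 2 + 2 * r := by ring
        omega
      have hgcd : Nat.gcd ((r + 1) ^ 2 - 1) (r + 1 - 1) = r + 1 - 1 := by
        apply Nat.gcd_eq_right
        exact ⟨r + 1 + 1, by rw [key]; ring⟩
      rw [hgcd, key, Nat.mul_div_cancel _ (by omega)]
    rw [← this]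
    exact IsPrimitiveRoot.orderOf _
  obtain ⟨ζ, hζ⟩ := hζ
  have hTcard : (nthRootsFinset (q + 1) (1 : F)).card = q + 1 := hζ.card_nthRootsFinset
  have hKge : q + 1 ≤ Fintype.card K := by
    have hmem : ∀ x ∈ nthRootsFinset (q + 1) (1 : F), x ∈ (K : Set F) := by
      intro x hx
      exact AddSubgroup.subset_closure (hTsub x hx)
    have hinj : Function.Injective
        (fun x : (nthRootsFinset (q + 1) (1 : F) : Finset F) =>
          (⟨x.1, hmem x.1 x.2⟩ : K)) := by
      intro x y hxy
      simp only [Subtype.mk.injEq] at hxy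
      exact Subtype.ext hxy
    calc q + 1 = Fintype.card (nthRootsFinset (q + 1) (1 : F)) := by
          rw [Fintype.card_coe, hTcard]
      _ ≤ Fintype.card K := Fintype.card_le_of_injective _ hinj
  -- the power formula for the cardinality
  have hn : Fintype.card F = Fintype.card K ^ Module.finrank K F :=
    Module.card_eq_pow_finrank (K := K) (V := F)
  have hKcard : Fintype.card K = q ^ 2 := by
    have h1 : Fintype.card K ^ Module.finrank K F = q ^ 2 := by rw [← hn, hF]
    set n := Module.finrank K F with hdim
    have hn0 : n ≠ 0 := by
      intro h
      rw [h, pow_zero] at h1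
      nlinarith
    have hn1 : n = 1 := by
      by_contra h
      have h2 : 2 ≤ n := by omega
      have : (q + 1) ^ 2 ≤ Fintype.card K ^ n :=
        le_trans (Nat.pow_le_pow_left hKge 2) (Nat.pow_le_pow_right (by omega) h2)
      nlinarith
    rw [hn1, pow_one] at h1
    exact h1
  -- conclude closure = ⊤
  have htop : A = ⊤ := by
    apply AddSubgroup.eq_top_of_card_eq
    rw [Nat.card_eq_fintype_card, Nat.card_eq_fintype_card, hF, ← hKcard]
    exact Fintype.card_congr (Equiv.subtypeEquivRight fun x => Iff.rfl)
  refine ⟨htop, ?_⟩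
  -- connectivity
  set G := SimpleGraph.fromRel fun g h : F => g - h ∈ S with hG
  have htrans : ∀ (a x y : F), G.Reachable x y → G.Reachable (x + a) (y + a) := by
    intro a x y hxy
    let φ : G →g G := by
      refine ⟨Equiv.addRight a, ?_⟩
      intro u v huv
      simp only [hG, SimpleGraph.fromRel_adj] at huv ⊢
      refine ⟨by simpa using huv.1, ?_⟩
      simpa [add_sub_add_right_eq_sub] using huv.2
    exact hxy.map φ
  have hreach0 : ∀ x ∈ A, G.Reachable x 0 := by
    intro x hx
    induction hx using AddSubgroup.closure_induction with
    | mem s hs =>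
        apply SimpleGraph.Adj.reachable
        simp only [hG, SimpleGraph.fromRel_adj]
        constructor
        · intro h
          rw [h] at hs
          simp [hS, zero_pow] at hs
        · left; simpa using hs
    | zero => exact SimpleGraph.Reachable.refl 0
    | add x y hx hy ihx ihy =>
        have h1 : G.Reachable (x + y) (0 + y) := htrans y x 0 ihx
        rw [zero_add] at h1
        exact h1.trans ihy
    | neg x hx ihx =>
        have h1 : G.Reachable (x + -x) (0 + -x) := htrans (-x) x 0 ihx
        rw [add_neg_cancel, zero_add] at h1
        exact h1.symm
  refine ⟨fun u v => ?_⟩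
  · have hu : u - v ∈ A := by rw [htop]; trivial
    have h1 : G.Reachable (u - v + v) (0 + v) := htrans v (u - v) 0 (hreach0 _ hu)
    rwa [sub_add_cancel, zero_add] at h1
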